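/- Let G be a compact group acting freely and measurably on X, with measurable orbit selector γ and measurable representative inversion τ : X → G satisfying τ(x)·γ(x) = x and τ(g·x) = g·τ(x) for all x, g. If P is G-invariant and X ∼ P, then τ(X) has distribution λ, the normalized Haar measure on G, and τ(X) is independent of γ(X). -/

import Mathlib

open MeasureTheory

/-- For a free measurable action of a compact group `G` on `X` with measurable orbit
selector `γ` and measurable representative inversion `τ` (`τ(x) • γ(x) = x`,
`τ(g•x) = g * τ(x)`): if `P` is `G`-invariant and `X ∼ P`, then `τ(X) ∼ λ` (normalized
Haar) and `τ(X)` is independent of `γ(X)`, i.e. the joint law of `(τ(X), γ(X))` is the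
product `λ ⊗ (γ_*P)`. -/
theorem repInversion_haar_and_indep {G X : Type*} [Group G] [TopologicalSpace G]
    [IsTopologicalGroup G] [CompactSpace G] [MeasurableSpace G] [BorelSpace G]
    [MulAction G X] [MeasurableSpace X] [MeasurableSMul₂ G X]
    (μ : Measure G) [IsProbabilityMeasure μ] [μ.IsMulLeftInvariant] [μ.IsMulRightInvariant]
    (hfree : ∀ (g : G) (x : X), g • x = x → g = 1)
    (γ : X → X) (hγmeas : Measurable γ)
    (hγinv : ∀ (g : G) (x : X), γ (g • x) = γ x)
    (hγorb : ∀ x : X, γ x ∈ MulAction.orbit G x)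
    (τ : X → G) (hτmeas : Measurable τ)
    (hτγ : ∀ x : X, τ x • γ x = x)
    (hτequiv : ∀ (g : G) (x : X), τ (g • x) = g * τ x)
    (P : Measure X) [IsProbabilityMeasure P]
    (hP : ∀ g : G, Measure.map (fun x => g • x) P = P) :
    Measure.map τ P = μ ∧
      Measure.map (fun x => (τ x, γ x)) P = μ.prod (Measure.map γ P) := by
  have hmeas_pair : Measurable fun x => (τ x, γ x) := hτmeas.prodMk hγmeas
  have hsmul_meas : Measurable fun p : G × X => p.1 • p.2 := measurable_smul
  have hφ : Measurable ((fun x => (τ x, γ x)) ∘ fun p : G × X => p.1 • p.2) :=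
    hmeas_pair.comp hsmul_meas
  -- averaging: P is the pushforward of μ.prod P under the action
  have hPmap : Measure.map (fun p : G × X => p.1 • p.2) (μ.prod P) = P := by
    ext A hA
    rw [Measure.map_apply hsmul_meas hA, Measure.prod_apply (hsmul_meas hA)]
    have h1 : ∀ g : G, P (Prod.mk g ⁻¹' ((fun p : G × X => p.1 • p.2) ⁻¹' A)) = P A := by
      intro g
      have h2 := hP g
      conv_rhs => rw [← h2]
      rw [Measure.map_apply (measurable_const_smul g) hA]
      rfl
    simp [h1]
  -- the joint law of (g * τ x, γ x) under μ.prod P is the product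
  have key : Measure.map ((fun x => (τ x, γ x)) ∘ fun p : G × X => p.1 • p.2) (μ.prod P)
      = μ.prod (Measure.map γ P) := by
    refine (Measure.prod_eq fun s t hs ht => ?_).symm
    rw [Measure.map_apply hφ (hs.prod ht),
      Measure.prod_apply_symm (hφ (hs.prod ht))]
    have h3 : ∀ x : X,
        μ ((fun g => (g, x)) ⁻¹' (((fun x => (τ x, γ x)) ∘ fun p : G × X => p.1 • p.2) ⁻¹' s ×ˢ t))
          = (γ ⁻¹' t).indicator (fun _ => μ s) x := by
      intro x
      by_cases hx : γ x ∈ t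
      · have hset : ((fun g => (g, x)) ⁻¹' (((fun x => (τ x, γ x)) ∘ fun p : G × X => p.1 • p.2) ⁻¹' s ×ˢ t))
            = (fun g => g * τ x) ⁻¹' s := by
          ext g; simp [hτequiv, hγinv, hx]
        rw [hset, measure_preimage_mul_right μ (τ x) s,
          Set.indicator_of_mem (show x ∈ γ ⁻¹' t from hx)]
      · have hset : ((fun g => (g, x)) ⁻¹' (((fun x => (τ x, γ x)) ∘ fun p : G × X => p.1 • p.2) ⁻¹' s ×ˢ t))
            = (∅ : Set G) := by
          ext g; simp [hτequiv, hγinv, hx]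
        rw [hset, measure_empty, Set.indicator_of_notMem (show x ∉ γ ⁻¹' t from hx)]
    rw [lintegral_congr h3, lintegral_indicator (hγmeas ht)]
    simp [Measure.map_apply hγmeas ht, mul_comm]
  have hjoint : Measure.map (fun x => (τ x, γ x)) P = μ.prod (Measure.map γ P) := by
    conv_lhs => rw [← hPmap]
    rw [Measure.map_map hmeas_pair hsmul_meas, key]
  refine ⟨?_, hjoint⟩
  have hτ : τ = Prod.fst ∘ fun x => (τ x, γ x) := rfl
  rw [hτ, ← Measure.map_map measurable_fst hmeas_pair, hjoint, Measure.map_fst_prod]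
  have : Measure.map γ P Set.univ = 1 := by
    rw [Measure.map_apply hγmeas MeasurableSet.univ]; simp
  simp [this]
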